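/- Let Φ denote the CDF of the standard Gaussian measure on ℝ, let a* ∈ (0,1), e* = 1 − a*, and d₋ ∈ ℝ, and for ρ ∈ [0,1) let κ(ρ) be the unique nonnegative real with Φ(κ(ρ)/√2) = (1 + ρ)/2. Then the optimal team accuracy function A(ρ) = a* + e*·Φ((d₋ − κ(ρ))/√2) is strictly decreasing in ρ on [0,1), and A(ρ) < 1 for every ρ ∈ [0,1). -/

import Mathlib

open MeasureTheory ProbabilityTheory

/-- `Φ`, the cumulative distribution function of the standard Gaussian measure on `ℝ`
(mean 0, variance 1). -/
noncomputable def stdGaussianCDF (x : ℝ) : ℝ :=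
  ((gaussianReal 0 1) (Set.Iic x)).toReal

lemma gaussianReal_pos_of_volume_pos {s : Set ℝ} (hs : MeasureTheory.volume s ≠ 0) :
    0 < gaussianReal 0 1 s := by
  rw [pos_iff_ne_zero]
  intro h
  exact hs ((gaussianReal_absolutelyContinuous' 0 (by norm_num)) h)

lemma stdGaussianCDF_strictMono : StrictMono stdGaussianCDF := by
  intro x y hxy
  unfold stdGaussianCDF
  have hunion : Set.Iic x ∪ Set.Ioc x y = Set.Iic y := Set.Iic_union_Ioc_eq_Iic hxy.le
  have hdisj : Disjoint (Set.Iic x) (Set.Ioc x y) := by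
    rw [Set.disjoint_left]; intro a ha ha'; exact absurd ha (not_le.2 ha'.1)
  have hmeas : gaussianReal 0 1 (Set.Iic y)
      = gaussianReal 0 1 (Set.Iic x) + gaussianReal 0 1 (Set.Ioc x y) := by
    rw [← hunion, measure_union hdisj measurableSet_Ioc]
  have hpos : 0 < gaussianReal 0 1 (Set.Ioc x y) := by
    apply gaussianReal_pos_of_volume_pos
    simp [Real.volume_Ioc, hxy, sub_pos.2 hxy]
  have hfin1 : gaussianReal 0 1 (Set.Iic x) ≠ ⊤ := measure_ne_top _ _
  have hfin2 : gaussianReal 0 1 (Set.Ioc x y) ≠ ⊤ := measure_ne_top _ _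
  rw [hmeas, ENNReal.toReal_add hfin1 hfin2]
  have := ENNReal.toReal_pos hpos.ne' hfin2
  linarith

lemma stdGaussianCDF_lt_one (x : ℝ) : stdGaussianCDF x < 1 := by
  unfold stdGaussianCDF
  have hunion : Set.Iic x ∪ Set.Ioi x = Set.univ := Set.Iic_union_Ioi
  have hdisj : Disjoint (Set.Iic x) (Set.Ioi x) := by
    rw [Set.disjoint_left]; intro a ha ha'; exact absurd (Set.mem_Iic.1 ha) (not_le.2 (Set.mem_Ioi.1 ha'))
  have h1 : gaussianReal 0 1 (Set.Iic x) + gaussianReal 0 1 (Set.Ioi x) = 1 := by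
    rw [← measure_union hdisj measurableSet_Ioi, hunion, measure_univ]
  have hpos : 0 < gaussianReal 0 1 (Set.Ioi x) := by
    apply gaussianReal_pos_of_volume_pos
    simp [Real.volume_Ioi]
  have hfin1 : gaussianReal 0 1 (Set.Iic x) ≠ ⊤ := measure_ne_top _ _
  have hfin2 : gaussianReal 0 1 (Set.Ioi x) ≠ ⊤ := measure_ne_top _ _
  have := ENNReal.toReal_pos hpos.ne' hfin2
  have hsum : (gaussianReal 0 1 (Set.Iic x)).toReal + (gaussianReal 0 1 (Set.Ioi x)).toReal = 1 := by
    rw [← ENNReal.toReal_add hfin1 hfin2, h1]; simp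
  linarith

theorem optimal_team_accuracy_decreasing
    (aStar eStar dMinus : ℝ) (haStar0 : 0 < aStar) (haStar1 : aStar < 1)
    (heStar : eStar = 1 - aStar)
    (κ : ℝ → ℝ)
    (hκ : ∀ ρ ∈ Set.Ico (0 : ℝ) 1,
      0 ≤ κ ρ ∧ stdGaussianCDF (κ ρ / Real.sqrt 2) = (1 + ρ) / 2)
    (A : ℝ → ℝ)
    (hA : A = fun ρ => aStar + eStar * stdGaussianCDF ((dMinus - κ ρ) / Real.sqrt 2)) :
    StrictAntiOn A (Set.Ico (0 : ℝ) 1) ∧ ∀ ρ ∈ Set.Ico (0 : ℝ) 1, A ρ < 1 := by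
  have heStarPos : 0 < eStar := by rw [heStar]; linarith
  have hsqrt : 0 < Real.sqrt 2 := Real.sqrt_pos.2 (by norm_num)
  constructor
  · intro ρ₁ hρ₁ ρ₂ hρ₂ h12
    have h1 := (hκ ρ₁ hρ₁).2
    have h2 := (hκ ρ₂ hρ₂).2
    have hκlt : κ ρ₁ < κ ρ₂ := by
      have : stdGaussianCDF (κ ρ₁ / Real.sqrt 2) < stdGaussianCDF (κ ρ₂ / Real.sqrt 2) := by
        rw [h1, h2]; linarith
      have := stdGaussianCDF_strictMono.lt_iff_lt.1 this
      exact (div_lt_div_iff_of_pos_right hsqrt).1 this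
    have harg : (dMinus - κ ρ₂) / Real.sqrt 2 < (dMinus - κ ρ₁) / Real.sqrt 2 := by
      apply div_lt_div_of_pos_right (by linarith) hsqrt
    have := stdGaussianCDF_strictMono harg
    rw [hA]
    simp only
    nlinarith
  · intro ρ hρ
    rw [hA]
    simp only
    have := stdGaussianCDF_lt_one ((dMinus - κ ρ) / Real.sqrt 2)
    nlinarith
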